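/- Suppose X and Y are complete metric spaces, f₊ is lower semicontinuous on a neighbourhood of (x̄,ȳ), and conditions (P1)–(P2) hold. Then f has an error bound with respect to x at (x̄,ȳ) provided that any one of the following holds: (a) \overline{|∇f|}^◇(x̄,ȳ) > 0; (b) liminf_{x→x̄, f(x,y)↓0} f(x,y)/d(x,x̄) > 0; (c) \overline{|∇f|}^{>}(x̄,ȳ) > 0; (d) \overline{|∇f|}^{>+}(x̄,ȳ) > 0. Moreover, condition (a) is also necessary for the error bound property of f at (x̄,ȳ). -/

import Mathlib

set_option linter.unusedVariables false
set_option linter.unusedSectionVars false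
set_option maxHeartbeats 1000000


open Filter Metric Set Topology
open scoped Classical

noncomputable section

namespace HolderPaper

/-- Extended-real quotient `a / d` of an extended real by a nonnegative real,
with the convention that division by `0` yields `⊤`. -/
def equot (a : EReal) (d : ℝ) : EReal := if d = 0 then ⊤ else a * ((d⁻¹ : ℝ) : EReal)

section MetricDefs

variable {X Y : Type*} [MetricSpace X] [MetricSpace Y]

/-- The asymmetric maximum-type distance `d_ρ((x,y),(u,v)) = max{d(x,u), ρ d(y,v)}`. -/
def drho (ρ : ℝ) (p q : X × Y) : ℝ := max (dist p.1 q.1) (ρ * dist p.2 q.2)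

/-- Positive part `f₊`. -/
def fplus (f : X × Y → EReal) (p : X × Y) : EReal := max (f p) 0

/-- Condition (P1): `f(x,y) > 0` whenever `y ≠ ybar`. -/
def P1 (f : X × Y → EReal) (ybar : Y) : Prop := ∀ p : X × Y, p.2 ≠ ybar → 0 < f p

/-- Condition (P2): `liminf_{f(x,y)↓0} f(x,y)/d(y,ybar) > 0`. -/
def P2 (f : X × Y → EReal) (ybar : Y) : Prop :=
  0 < liminf (fun p : X × Y => equot (f p) (dist p.2 ybar)) ((𝓝[>] (0 : EReal)).comap f)

/-- The lower 0-level set `S(f) = {x | f(x,ybar) ≤ 0}`. -/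
def Sf (f : X × Y → EReal) (ybar : Y) : Set X := {x | f (x, ybar) ≤ 0}

/-- The error bound modulus `Er f(xbar,ybar)`:
`liminf` of `f(x,y)/d(x,S(f))` over pairs `(x,y)` with `f(x,y) > 0` as `x → xbar`. -/
def erMod (f : X × Y → EReal) (xbar : X) (ybar : Y) : EReal :=
  liminf (fun p : X × Y => equot (f p) (infDist p.1 (Sf f ybar)))
    ((𝓝 xbar).comap Prod.fst ⊓ 𝓟 {p : X × Y | 0 < f p})

/-- `f` has an error bound w.r.t. `x` at `(xbar,ybar)` with constant `τ`. -/
def hasErrorBound (f : X × Y → EReal) (xbar : X) (ybar : Y) (τ : ℝ) : Prop :=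
  ∃ U ∈ 𝓝 xbar, ∀ x ∈ U, ∀ y : Y, ((τ * infDist x (Sf f ybar) : ℝ) : EReal) ≤ fplus f (x, y)

/-- The nonlocal ρ-slope `|∇f|◇_ρ(x,y)` (set to `⊤` if `f(x,y) = ⊤`). -/
def nslope (f : X × Y → EReal) (ρ : ℝ) (p : X × Y) : EReal :=
  if f p = ⊤ then ⊤
  else ⨆ (q : X × Y) (_ : q ≠ p), equot (max (f p - fplus f q) 0) (drho ρ p q)

/-- The (local) ρ-slope `|∇f|_ρ(x,y)`. -/
def lslope (f : X × Y → EReal) (ρ : ℝ) (p : X × Y) : EReal :=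
  limsup (fun q : X × Y => equot (max (f p - f q) 0) (drho ρ q p)) (𝓝[≠] p)

/-- The uniform strict outer slope `\overline{|∇f|}^◇(xbar,ybar)`
(`lim_{ρ↓0}` of a quantity nonincreasing in `ρ`, i.e. the supremum over `ρ > 0`). -/
def uss (f : X × Y → EReal) (xbar : X) (ybar : Y) : EReal :=
  ⨆ (ρ : ℝ) (_ : 0 < ρ),
    ⨅ (p : X × Y) (_ : dist p.1 xbar < ρ ∧ 0 < f p ∧ f p < (ρ : EReal)), nslope f ρ p

/-- The strict outer slope `\overline{|∇f|}^{>}(xbar,ybar)`. -/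
def sos (f : X × Y → EReal) (xbar : X) (ybar : Y) : EReal :=
  ⨆ (ρ : ℝ) (_ : 0 < ρ),
    ⨅ (p : X × Y) (_ : dist p.1 xbar < ρ ∧ 0 < f p ∧ f p < (ρ : EReal)), lslope f ρ p

/-- The modified strict outer slope `\overline{|∇f|}^{>+}(xbar,ybar)`. -/
def msos (f : X × Y → EReal) (xbar : X) (ybar : Y) : EReal :=
  ⨆ (ρ : ℝ) (_ : 0 < ρ),
    ⨅ (p : X × Y) (_ : dist p.1 xbar < ρ ∧ 0 < f p ∧ f p < (ρ : EReal)),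
      max (lslope f ρ p) (equot (f p) (dist p.1 xbar))

/-- Graph of a set-valued mapping. -/
def gph (F : X → Set Y) : Set (X × Y) := {p | p.2 ∈ F p.1}

/-- Inverse image `F⁻¹(ybar)`. -/
def Finv (F : X → Set Y) (ybar : Y) : Set X := {x | ybar ∈ F x}

/-- The function `f(x,y) = (d(y,ybar))^q` on `gph F`, `+∞` elsewhere. -/
def fFq (F : X → Set Y) (ybar : Y) (qq : ℝ) : X × Y → EReal :=
  fun p => if p ∈ gph F then ((dist p.2 ybar ^ qq : ℝ) : EReal) else ⊤

/-- The function `f(x,y) = ‖y - ybar‖` on `gph F`, `+∞` elsewhere (case `q = 1`). -/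
def fF1 (F : X → Set Y) (ybar : Y) : X × Y → EReal :=
  fun p => if p ∈ gph F then ((dist p.2 ybar : ℝ) : EReal) else ⊤

/-- The ρ-slope `|∇F|_ρ(x,y)` of a set-valued mapping at `(x,y) ∈ gph F`. -/
def FslopeR (F : X → Set Y) (ybar : Y) (ρ : ℝ) (p : X × Y) : EReal :=
  limsup (fun u : X × Y => equot ((max (dist p.2 ybar - dist u.2 ybar) 0 : ℝ) : EReal) (drho ρ u p))
    (𝓝[gph F \ {p}] p)

/-- The nonlocal (q,ρ)-slope `|∇F|◇_{q,ρ}(x,y)` of a set-valued mapping. -/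
def FnslopeQ (F : X → Set Y) (ybar : Y) (qq ρ : ℝ) (p : X × Y) : EReal :=
  ⨆ (u : X × Y) (_ : u ∈ gph F ∧ u ≠ p),
    equot ((max (dist p.2 ybar ^ qq - dist u.2 ybar ^ qq) 0 : ℝ) : EReal) (drho ρ u p)

/-- The uniform strict q-slope `\overline{|∇F|}^◇_q(xbar,ybar)`. -/
def ussFq (F : X → Set Y) (xbar : X) (ybar : Y) (qq : ℝ) : EReal :=
  ⨆ (ρ : ℝ) (_ : 0 < ρ),
    ⨅ (p : X × Y)
      (_ : p ∈ gph F ∧ dist p.1 xbar < ρ ∧ dist p.2 ybar < ρ ∧ p.1 ∉ Finv F ybar),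
      FnslopeQ F ybar qq ρ p

/-- The strict q-slope `\overline{|∇F|}_q(xbar,ybar)`. -/
def sosFq (F : X → Set Y) (xbar : X) (ybar : Y) (qq : ℝ) : EReal :=
  (qq : EReal) *
    ⨆ (ρ : ℝ) (_ : 0 < ρ),
      ⨅ (p : X × Y)
        (_ : p ∈ gph F ∧ dist p.1 xbar < ρ ∧ dist p.2 ybar < ρ ∧ p.1 ∉ Finv F ybar),
        ((dist p.2 ybar ^ (qq - 1) : ℝ) : EReal) * FslopeR F ybar ρ p

/-- The modified strict q-slope `\overline{|∇F|}^{+}_q(xbar,ybar)`. -/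
def msosFq (F : X → Set Y) (xbar : X) (ybar : Y) (qq : ℝ) : EReal :=
  ⨆ (ρ : ℝ) (_ : 0 < ρ),
    ⨅ (p : X × Y)
      (_ : p ∈ gph F ∧ dist p.1 xbar < ρ ∧ dist p.2 ybar < ρ ∧ p.1 ∉ Finv F ybar),
      max (((qq * dist p.2 ybar ^ (qq - 1) : ℝ) : EReal) * FslopeR F ybar ρ p)
        (equot ((dist p.2 ybar ^ qq : ℝ) : EReal) (dist p.1 xbar))

/-- The Hölder subregularity modulus of order `q`:
`liminf_{x→xbar, x∉F⁻¹(ybar)} (d(ybar,F(x)))^q / d(x,F⁻¹(ybar))`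
(with `d(ybar,∅) = +∞`). -/
def srq (F : X → Set Y) (xbar : X) (ybar : Y) (qq : ℝ) : EReal :=
  liminf
    (fun x : X =>
      equot (if F x = ∅ then ⊤ else ((infDist ybar (F x) ^ qq : ℝ) : EReal))
        (infDist x (Finv F ybar)))
    (𝓝[(Finv F ybar)ᶜ] xbar)

end MetricDefs

section NormedDefs

variable {X Y : Type*} [NormedAddCommGroup X] [NormedSpace ℝ X]
  [NormedAddCommGroup Y] [NormedSpace ℝ Y]

/-- The Fréchet subdifferential of `f : X × Y → ℝ∪{+∞}` at `p`, as a set of pairs of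
continuous linear functionals (empty when `f p = ⊤`). -/
def fsubdiff (f : X × Y → EReal) (p : X × Y) : Set ((X →L[ℝ] ℝ) × (Y →L[ℝ] ℝ)) :=
  {φ | f p ≠ ⊤ ∧ 0 ≤ liminf
      (fun q : X × Y =>
        equot (f q - f p - ((φ.1 (q.1 - p.1) + φ.2 (q.2 - p.2) : ℝ) : EReal)) (dist q p))
      (𝓝[≠] p)}

/-- The subdifferential ρ-slope `|∂f|_ρ(x,y)`. -/
def sdslope (f : X × Y → EReal) (ρ : ℝ) (p : X × Y) : EReal :=
  ⨅ (φ : (X →L[ℝ] ℝ) × (Y →L[ℝ] ℝ)) (_ : φ ∈ fsubdiff f p ∧ ‖φ.2‖ < ρ), (‖φ.1‖ : EReal)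

/-- The strict outer subdifferential slope `\overline{|∂f|}^{>}(xbar,ybar)`. -/
def ssds (f : X × Y → EReal) (xbar : X) (ybar : Y) : EReal :=
  ⨆ (ρ : ℝ) (_ : 0 < ρ),
    ⨅ (p : X × Y) (_ : dist p.1 xbar < ρ ∧ 0 < f p ∧ f p < (ρ : EReal)), sdslope f ρ p

/-- The modified strict outer subdifferential slope `\overline{|∂f|}^{>+}(xbar,ybar)`. -/
def mssds (f : X × Y → EReal) (xbar : X) (ybar : Y) : EReal :=
  ⨆ (ρ : ℝ) (_ : 0 < ρ),
    ⨅ (p : X × Y) (_ : dist p.1 xbar < ρ ∧ 0 < f p ∧ f p < (ρ : EReal)),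
      max (sdslope f ρ p) (equot (f p) (dist p.1 xbar))

/-- `f` is convex on the set `U` (with extended-real values). -/
def convexOnE (U : Set (X × Y)) (f : X × Y → EReal) : Prop :=
  Convex ℝ U ∧ ∀ p ∈ U, ∀ q ∈ U, ∀ t : ℝ, 0 ≤ t → t ≤ 1 →
    f (t • p + (1 - t) • q) ≤ (t : EReal) * f p + ((1 - t : ℝ) : EReal) * f q

/-- The Fréchet normal cone to `Ω ⊂ X × Y` at `p ∈ Ω`. -/
def ncone (Ω : Set (X × Y)) (p : X × Y) : Set ((X →L[ℝ] ℝ) × (Y →L[ℝ] ℝ)) :=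
  {φ | limsup
      (fun q : X × Y =>
        equot (((φ.1 (q.1 - p.1) + φ.2 (q.2 - p.2) : ℝ)) : EReal) (dist q p))
      (𝓝[Ω \ {p}] p) ≤ 0}

/-- The Fréchet coderivative `D*F(x,y)(y*)`. -/
def coderiv (F : X → Set Y) (p : X × Y) (ys : Y →L[ℝ] ℝ) : Set (X →L[ℝ] ℝ) :=
  {xs | (xs, -ys) ∈ ncone (gph F) p}

/-- The (normalized) duality mapping `J(y) = {y* : ‖y*‖ = 1, ⟨y*,y⟩ = ‖y‖}`. -/
def Jdual (y : Y) : Set (Y →L[ℝ] ℝ) := {ys | ‖ys‖ = 1 ∧ ys y = ‖y‖}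

/-- The subdifferential ρ-slope of `F` at `(x,y) ∈ gph F`:
`inf{‖x*‖ : x* ∈ D*F(x,y)(J(y-ybar) + ρ𝔹*)}`. -/
def FsdSlope (F : X → Set Y) (ybar : Y) (ρ : ℝ) (p : X × Y) : EReal :=
  ⨅ (xs : X →L[ℝ] ℝ)
    (_ : ∃ ws : Y →L[ℝ] ℝ, (∃ ys ∈ Jdual (p.2 - ybar), ‖ws - ys‖ ≤ ρ) ∧ xs ∈ coderiv F p ws),
    (‖xs‖ : EReal)

/-- `ξ_q(y) = ‖y - ybar‖^{1-q}/q`. -/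
def xiq (qq : ℝ) (ybar y : Y) : ℝ := ‖y - ybar‖ ^ (1 - qq) / qq

/-- The strict subdifferential q-slope `\overline{|∂F|}_q(xbar,ybar)`. -/
def ssdFq (F : X → Set Y) (xbar : X) (ybar : Y) (qq : ℝ) : EReal :=
  (qq : EReal) *
    ⨆ (ρ : ℝ) (_ : 0 < ρ),
      ⨅ (p : X × Y)
        (_ : p ∈ gph F ∧ ‖p.1 - xbar‖ < ρ ∧ ‖p.2 - ybar‖ < ρ ∧ p.1 ∉ Finv F ybar),
        ((‖p.2 - ybar‖ ^ (qq - 1) : ℝ) : EReal) * FsdSlope F ybar (xiq qq ybar p.2 * ρ) p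

/-- The modified strict subdifferential q-slope `\overline{|∂F|}^{+}_q(xbar,ybar)`. -/
def msdFq (F : X → Set Y) (xbar : X) (ybar : Y) (qq : ℝ) : EReal :=
  ⨆ (ρ : ℝ) (_ : 0 < ρ),
    ⨅ (p : X × Y)
      (_ : p ∈ gph F ∧ ‖p.1 - xbar‖ < ρ ∧ ‖p.2 - ybar‖ < ρ ∧ p.1 ∉ Finv F ybar),
      max (((qq * ‖p.2 - ybar‖ ^ (qq - 1) : ℝ) : EReal) * FsdSlope F ybar (xiq qq ybar p.2 * ρ) p)
        (equot ((‖p.2 - ybar‖ ^ qq : ℝ) : EReal) ‖p.1 - xbar‖)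

/-- The normalized ε-enlargement `J^q_ε(y)` of the q-duality mapping
`J^q(y) = q‖y‖^{q-1} J(y)`. -/
def JqEps (qq ε : ℝ) (y : Y) : Set (Y →L[ℝ] ℝ) :=
  {ws | ∃ us ∈ Jdual y, ∃ vs : Y →L[ℝ] ℝ, ‖vs‖ ≤ 1 ∧
    (qq * ‖y‖ ^ (qq - 1)) • us + ε • vs ≠ 0 ∧
    ws = ‖(qq * ‖y‖ ^ (qq - 1)) • us + ε • vs‖⁻¹ • ((qq * ‖y‖ ^ (qq - 1)) • us + ε • vs)}

/-- The constant `β` of Li and Mordukhovich. -/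
def betaLM (F : X → Set Y) (xbar : X) (ybar : Y) (qq : ℝ) : EReal :=
  ⨆ (ε : ℝ) (_ : 0 < ε),
    ⨅ (p : X × Y) (xs : X →L[ℝ] ℝ)
      (_ : p ∈ gph F ∧ p.1 ∉ Finv F ybar ∧ ‖p.1 - xbar‖ < ε ∧
           ‖p.2 - ybar‖ < min ε (‖p.1 - xbar‖ ^ (1 / 2 : ℝ)) ∧
           ∃ ws ∈ JqEps qq ε (p.2 - ybar), xs ∈ coderiv F p ws),
      ((qq * ‖xs‖ * ‖p.2 - ybar‖ ^ (qq - 1) : ℝ) : EReal)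

end NormedDefs

end HolderPaper

namespace HolderPaper

lemma equot_zero_den (a : EReal) : equot a 0 = ⊤ := if_pos rfl

lemma equot_le_coe_iff {a : EReal} {d c : ℝ} (hd : 0 < d) :
    equot a d ≤ (c : EReal) ↔ a ≤ ((c * d : ℝ) : EReal) := by
  unfold equot
  rw [if_neg hd.ne']
  induction a using EReal.rec with
  | bot =>
      rw [EReal.bot_mul_of_pos (by exact_mod_cast inv_pos.mpr hd)]
      simp [← EReal.coe_mul]
  | coe r =>
      rw [← EReal.coe_mul, EReal.coe_le_coe_iff, EReal.coe_le_coe_iff,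
        ← div_eq_mul_inv, div_le_iff₀ hd]
  | top =>
      rw [EReal.top_mul_of_pos (by exact_mod_cast inv_pos.mpr hd)]
      simp [← EReal.coe_mul]

lemma coe_le_equot_iff {a : EReal} {d c : ℝ} (hd : 0 < d) :
    (c : EReal) ≤ equot a d ↔ ((c * d : ℝ) : EReal) ≤ a := by
  unfold equot
  rw [if_neg hd.ne']
  induction a using EReal.rec with
  | bot =>
      rw [EReal.bot_mul_of_pos (by exact_mod_cast inv_pos.mpr hd)]
      simp [← EReal.coe_mul]
  | coe r =>
      rw [← EReal.coe_mul, EReal.coe_le_coe_iff, EReal.coe_le_coe_iff,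
        ← div_eq_mul_inv, le_div_iff₀ hd]
  | top =>
      rw [EReal.top_mul_of_pos (by exact_mod_cast inv_pos.mpr hd)]
      simp [← EReal.coe_mul]

lemma coe_lt_equot_iff {a : EReal} {d c : ℝ} (hd : 0 < d) :
    (c : EReal) < equot a d ↔ ((c * d : ℝ) : EReal) < a := by
  rw [lt_iff_not_ge, lt_iff_not_ge, equot_le_coe_iff hd]

lemma equot_lt_coe_iff {a : EReal} {d c : ℝ} (hd : 0 < d) :
    equot a d < (c : EReal) ↔ a < ((c * d : ℝ) : EReal) := by
  rw [lt_iff_not_ge, lt_iff_not_ge, coe_le_equot_iff hd]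

/-- helper : bound `max (↑r - b) 0 ≤ ↑s` by a real inequality. -/
lemma max_coe_sub_le {r s : ℝ} (b : EReal) (hb : 0 ≤ b) (hs : 0 ≤ s)
    (h : ∀ t : ℝ, 0 ≤ t → b = (t : EReal) → r - t ≤ s) :
    max ((r : EReal) - b) 0 ≤ (s : EReal) := by
  induction b using EReal.rec with
  | bot => exact absurd hb (by simp)
  | coe t =>
      have ht : 0 ≤ t := by exact_mod_cast hb
      have := h t ht rfl
      rw [← EReal.coe_sub]
      rw [max_le_iff]
      constructor
      · exact_mod_cast this
      · exact_mod_cast hs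
  | top =>
      rw [EReal.sub_top]
      rw [max_le_iff]
      constructor
      · exact bot_le
      · exact_mod_cast hs


lemma evp {α : Type*} [MetricSpace α] [CompleteSpace α] {V : Set α} (hV : IsClosed V)
    {g : α → ℝ} (hg0 : ∀ x ∈ V, 0 ≤ g x) (hlsc : LowerSemicontinuousOn g V)
    {D : α → α → ℝ} (hD0 : ∀ a, D a a = 0)
    (hDtri : ∀ a b c, D a c ≤ D a b + D b c)
    {κ : ℝ} (hκ : 0 < κ) (hDd : ∀ a b, κ * dist a b ≤ D a b)
    (hDcont : ∀ a, Continuous (D a))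
    {x₀ : α} (hx₀ : x₀ ∈ V) :
    ∃ y ∈ V, g y + D x₀ y ≤ g x₀ ∧ ∀ z ∈ V, g y ≤ g z + D y z := by
  have hDnn : ∀ a b, 0 ≤ D a b := fun a b =>
    le_trans (mul_nonneg hκ.le dist_nonneg) (hDd a b)
  have key : ∀ (n : ℕ) (u : α), u ∈ V → ∃ w, w ∈ V ∧ (g w + D u w ≤ g u) ∧
      ∀ z ∈ V, g z + D u z ≤ g u → g w ≤ g z + (1/2 : ℝ)^n := by
    intro n u hu
    set A : Set ℝ := {t | ∃ z, (z ∈ V ∧ g z + D u z ≤ g u) ∧ t = g z} with hA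
    have hAne : A.Nonempty := ⟨g u, u, ⟨hu, by rw [hD0, add_zero]⟩, rfl⟩
    have hAbd : BddBelow A := ⟨0, by rintro t ⟨z, ⟨hz, _⟩, rfl⟩; exact hg0 z hz⟩
    obtain ⟨t, htA, htlt⟩ := Real.lt_sInf_add_pos hAne
      (show (0:ℝ) < (1/2:ℝ)^n by positivity)
    obtain ⟨w, ⟨hwV, hw1⟩, rfl⟩ := htA
    exact ⟨w, hwV, hw1, fun z hz hz2 =>
      le_trans htlt.le (by
        have : sInf A ≤ g z := csInf_le hAbd ⟨z, ⟨hz, hz2⟩, rfl⟩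
        linarith)⟩
  choose! next hnV hn1 hn2 using key
  let u : ℕ → α := fun n => Nat.rec x₀ (fun k x => next k x) n
  have u0 : u 0 = x₀ := rfl
  have uS : ∀ n, u (n+1) = next n (u n) := fun n => rfl
  have huV : ∀ n, u n ∈ V := by
    intro n; induction n with
    | zero => exact hx₀
    | succ k ih => rw [uS]; exact hnV k (u k) ih
  have step1 : ∀ n, g (u (n+1)) + D (u n) (u (n+1)) ≤ g (u n) := by
    intro n; rw [uS]; exact hn1 n (u n) (huV n)
  have chain : ∀ n m, n ≤ m → g (u m) + D (u n) (u m) ≤ g (u n) := by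
    intro n m hnm
    induction m, hnm using Nat.le_induction with
    | base => rw [hD0, add_zero]
    | succ m hnm ih =>
        have h1 := step1 m
        have h2 := hDtri (u n) (u m) (u (m+1))
        linarith
  have gmono : ∀ n m, n ≤ m → g (u m) ≤ g (u n) := by
    intro n m hnm
    have := chain n m hnm
    have := hDnn (u n) (u m)
    linarith
  have hbd : BddBelow (range (fun n => g (u n))) :=
    ⟨0, by rintro t ⟨n, rfl⟩; exact hg0 _ (huV n)⟩
  set L : ℝ := ⨅ n, g (u n) with hLdef
  have hL : Tendsto (fun n => g (u n)) atTop (𝓝 L) :=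
    tendsto_atTop_ciInf (fun a b hab => gmono a b hab) hbd
  have hgeL : ∀ n, L ≤ g (u n) := fun n => ciInf_le hbd n
  have hcauchy : CauchySeq u := by
    rw [Metric.cauchySeq_iff']
    intro ε hε
    obtain ⟨N, hN⟩ := exists_lt_of_ciInf_lt (show L < L + κ * ε by nlinarith)
    refine ⟨N, fun n hn => ?_⟩
    have h1 := chain N n hn
    have h2 := hDd (u N) (u n)
    have h3 := hgeL n
    rw [dist_comm]
    nlinarith [dist_nonneg (x := u N) (y := u n)]
  obtain ⟨y, hy⟩ := cauchySeq_tendsto_of_complete hcauchy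
  have hyV : y ∈ V := hV.mem_of_tendsto hy (Eventually.of_forall huV)
  have hyin : Tendsto u atTop (𝓝[V] y) :=
    tendsto_nhdsWithin_iff.mpr ⟨hy, Eventually.of_forall huV⟩
  have claim : ∀ n, g y + D (u n) y ≤ g (u n) := by
    intro n
    by_contra hcon
    push_neg at hcon
    obtain ⟨c, hc1, hc2⟩ := exists_between (show g (u n) - D (u n) y < g y by linarith)
    have hev1 : ∀ᶠ m in atTop, c < g (u m) :=
      hyin.eventually (hlsc y hyV c hc2)
    have hev2 : ∀ᶠ m in atTop, c ≤ g (u n) - D (u n) (u m) := by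
      filter_upwards [hev1, eventually_ge_atTop n] with m hm1 hm2
      have := chain n m hm2
      linarith
    have htend : Tendsto (fun m => g (u n) - D (u n) (u m)) atTop
        (𝓝 (g (u n) - D (u n) y)) :=
      tendsto_const_nhds.sub (((hDcont (u n)).tendsto y).comp hy)
    have := ge_of_tendsto htend hev2
    linarith
  refine ⟨y, hyV, by have := claim 0; rwa [u0] at this, ?_⟩
  intro z hzV
  by_contra hcon
  push_neg at hcon
  have feas : ∀ n, g z + D (u n) z ≤ g (u n) := by
    intro n
    have h1 := hDtri (u n) y z
    have h2 := claim n
    linarith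
  have hyz : ∀ n : ℕ, g y ≤ g z + (1/2:ℝ)^n := by
    intro n
    have h1 : g y ≤ g (u (n+1)) := by
      have := claim (n+1); have := hDnn (u (n+1)) y; linarith
    have h2 : g (u (n+1)) ≤ g z + (1/2:ℝ)^n := by
      rw [uS]; exact hn2 n (u n) (huV n) z hzV (feas n)
    linarith
  have htend : Tendsto (fun n : ℕ => g z + (1/2:ℝ)^n) atTop (𝓝 (g z + 0)) :=
    tendsto_const_nhds.add (tendsto_pow_atTop_nhds_zero_of_lt_one (by norm_num) (by norm_num))
  have := ge_of_tendsto htend (Eventually.of_forall hyz)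
  rw [add_zero] at this
  have := hDnn y z
  linarith


section MetricHelp
variable {X Y : Type*} [MetricSpace X] [MetricSpace Y]

lemma drho_self (ρ : ℝ) (p : X × Y) : drho ρ p p = 0 := by
  simp [drho]

lemma drho_comm (ρ : ℝ) (p q : X × Y) : drho ρ p q = drho ρ q p := by
  simp [drho, dist_comm]

lemma drho_triangle (ρ : ℝ) (hρ : 0 ≤ ρ) (a b c : X × Y) :
    drho ρ a c ≤ drho ρ a b + drho ρ b c := by
  unfold drho
  rw [max_le_iff]
  constructor
  · calc dist a.1 c.1 ≤ dist a.1 b.1 + dist b.1 c.1 := dist_triangle _ _ _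
      _ ≤ _ := add_le_add (le_max_left _ _) (le_max_left _ _)
  · have h1 : ρ * dist a.2 c.2 ≤ ρ * dist a.2 b.2 + ρ * dist b.2 c.2 := by
      nlinarith [dist_triangle a.2 b.2 c.2]
    exact le_trans h1 (add_le_add (le_max_right _ _) (le_max_right _ _))

lemma drho_nonneg {ρ : ℝ} (hρ : 0 ≤ ρ) (p q : X × Y) : 0 ≤ drho ρ p q :=
  le_trans dist_nonneg (le_max_left _ _)

lemma le_drho_left (ρ : ℝ) (p q : X × Y) : dist p.1 q.1 ≤ drho ρ p q := le_max_left _ _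

lemma le_drho_right (ρ : ℝ) (p q : X × Y) : ρ * dist p.2 q.2 ≤ drho ρ p q := le_max_right _ _

lemma dist_mul_le_drho {ρ : ℝ} (hρ0 : 0 < ρ) (hρ1 : ρ ≤ 1) (p q : X × Y) :
    ρ * dist p q ≤ drho ρ p q := by
  rw [Prod.dist_eq, mul_max_of_nonneg _ _ hρ0.le]
  unfold drho
  apply max_le_max _ (le_refl _)
  nlinarith [dist_nonneg (x := p.1) (y := q.1)]

lemma drho_le_dist {ρ : ℝ} (hρ0 : 0 < ρ) (hρ1 : ρ ≤ 1) (p q : X × Y) :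
    drho ρ p q ≤ dist p q := by
  rw [Prod.dist_eq]
  apply max_le_max (le_refl _)
  nlinarith [dist_nonneg (x := p.2) (y := q.2)]

lemma drho_pos {ρ : ℝ} (hρ : 0 < ρ) {p q : X × Y} (h : p ≠ q) : 0 < drho ρ p q := by
  rcases lt_or_ge 0 (drho ρ p q) with h1 | h1
  · exact h1
  · exfalso
    apply h
    have h2 : dist p.1 q.1 ≤ 0 := le_trans (le_drho_left ρ p q) h1
    have h3 : ρ * dist p.2 q.2 ≤ 0 := le_trans (le_drho_right ρ p q) h1
    have h4 : dist p.1 q.1 = 0 := le_antisymm h2 dist_nonneg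
    have h5 : dist p.2 q.2 = 0 := by
      nlinarith [dist_nonneg (x := p.2) (y := q.2)]
    ext
    · exact eq_of_dist_eq_zero h4
    · exact eq_of_dist_eq_zero h5

lemma drho_mono {ρ ρ' : ℝ} (h : ρ ≤ ρ') (p q : X × Y) : drho ρ p q ≤ drho ρ' p q :=
  max_le_max (le_refl _) (mul_le_mul_of_nonneg_right h dist_nonneg)

lemma fplus_nonneg (f : X × Y → EReal) (p : X × Y) : 0 ≤ fplus f p := le_max_right _ _

lemma fplus_of_pos {f : X × Y → EReal} {p : X × Y} (h : 0 ≤ f p) : fplus f p = f p :=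
  max_eq_left h

lemma fplus_of_nonpos {f : X × Y → EReal} {p : X × Y} (h : f p ≤ 0) : fplus f p = 0 :=
  max_eq_right h

/-- real value extraction. -/
lemma ereal_real {a : EReal} {x : ℝ} (h1 : 0 < a) (h2 : a < (x : EReal)) :
    ∃ r : ℝ, a = (r : EReal) ∧ 0 < r ∧ r < x := by
  have ht : a ≠ ⊤ := h2.ne_top
  have hb : a ≠ ⊥ := (ne_bot_of_gt (lt_trans (show (⊥:EReal) < 0 from bot_lt_iff_ne_bot.mpr (by simp)) h1))
  refine ⟨a.toReal, (EReal.coe_toReal ht hb).symm, ?_, ?_⟩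
  · exact_mod_cast (EReal.coe_toReal ht hb).symm ▸ h1
  · exact_mod_cast (EReal.coe_toReal ht hb).symm ▸ h2

end MetricHelp

lemma coe_lt_iff_lt_toReal {b : EReal} (ht : b ≠ ⊤) (hb : b ≠ ⊥) {c : ℝ} :
    (c : EReal) < b ↔ c < b.toReal := by
  conv_lhs => rw [← EReal.coe_toReal ht hb]
  exact EReal.coe_lt_coe_iff

section Extract
variable {ι : Type*}

lemma pos_iSup_extract {G : ℝ → ι → EReal} {R : ℝ → ι → Prop}
    (h : 0 < ⨆ (ρ : ℝ) (_ : 0 < ρ), ⨅ (p : ι) (_ : R ρ p), G ρ p) :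
    ∃ γ : ℝ, 0 < γ ∧ ∃ ρ : ℝ, 0 < ρ ∧ ∀ p, R ρ p → (γ : EReal) < G ρ p := by
  rw [lt_iSup_iff] at h
  obtain ⟨ρ, h⟩ := h
  rw [lt_iSup_iff] at h
  obtain ⟨hρ, h⟩ := h
  obtain ⟨γ, hγ0, hγ1⟩ := EReal.exists_between_coe_real h
  refine ⟨γ, by exact_mod_cast hγ0, ρ, hρ, fun p hp => lt_of_lt_of_le hγ1 ?_⟩
  exact iInf₂_le p hp

lemma pos_iSup_of {G : ℝ → ι → EReal} {R : ℝ → ι → Prop} {c ρ : ℝ}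
    (hc : 0 < c) (hρ : 0 < ρ) (h : ∀ p, R ρ p → (c : EReal) ≤ G ρ p) :
    0 < ⨆ (ρ : ℝ) (_ : 0 < ρ), ⨅ (p : ι) (_ : R ρ p), G ρ p := by
  have h1 : (c : EReal) ≤ ⨅ (p : ι) (_ : R ρ p), G ρ p := le_iInf₂ h
  have h2 : (0 : EReal) < (c : EReal) := by exact_mod_cast hc
  exact lt_of_lt_of_le h2 (le_trans h1 (le_iSup₂ (f := fun ρ _ => ⨅ (p : ι) (_ : R ρ p), G ρ p) ρ hρ))

end Extract

section Glem
variable {X Y : Type*} [MetricSpace X] [MetricSpace Y] {f : X × Y → EReal} {ybar : Y}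

lemma p2_cor (hP2 : P2 f ybar) :
    ∃ c2 : ℝ, 0 < c2 ∧ ∃ ε2 : ℝ, 0 < ε2 ∧
      ∀ p : X × Y, ∀ r : ℝ, f p = (r : EReal) → 0 < r → r < ε2 →
        c2 * dist p.2 ybar < r := by
  unfold P2 at hP2
  obtain ⟨c2, hc0, hc1⟩ := EReal.exists_between_coe_real hP2
  have hev : ∀ᶠ p in (𝓝[>] (0 : EReal)).comap f,
      (c2 : EReal) < equot (f p) (dist p.2 ybar) :=
    Filter.eventually_lt_of_lt_liminf hc1
  rw [Filter.eventually_comap] at hev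
  have hev' : {b : EReal | ∀ p : X × Y, f p = b →
      (c2 : EReal) < equot (f p) (dist p.2 ybar)} ∈ 𝓝[>] (0 : EReal) := hev
  obtain ⟨u, hu, husub⟩ := (mem_nhdsGT_iff_exists_Ioo_subset' (show (0:EReal) < ⊤ by simp)).mp hev'
  obtain ⟨ε2, hε0, hεu⟩ := EReal.exists_between_coe_real hu
  refine ⟨c2, by exact_mod_cast hc0, ε2, by exact_mod_cast hε0, ?_⟩
  intro p r hfp hr0 hrε
  have hmem : f p ∈ Ioo (0 : EReal) u := by
    constructor
    · rw [hfp]; exact_mod_cast hr0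
    · rw [hfp]; exact lt_trans (by exact_mod_cast hrε) hεu
  have h3 := husub hmem p rfl
  rw [hfp] at h3
  rcases eq_or_lt_of_le (dist_nonneg (x := p.2) (y := ybar)) with hd | hd
  · rw [← hd, mul_zero]; exact hr0
  · rw [coe_lt_equot_iff hd] at h3
    exact_mod_cast h3

/-- the truncated real-valued surrogate of `fplus f`. -/
def gfun (f : X × Y → EReal) (p : X × Y) : ℝ := (min (fplus f p) 1).toReal

lemma min_ne_top (p : X × Y) : min (fplus f p) 1 ≠ ⊤ := by
  intro h
  have h1 := min_le_right (fplus f p) 1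
  rw [h] at h1
  have h2 : (1 : EReal) = ⊤ := top_le_iff.mp h1
  rw [← EReal.coe_one] at h2
  exact EReal.coe_ne_top 1 h2

lemma min_nonneg' (p : X × Y) : 0 ≤ min (fplus f p) 1 :=
  le_min (fplus_nonneg f p) (by norm_num)

lemma min_ne_bot (p : X × Y) : min (fplus f p) 1 ≠ ⊥ :=
  ne_bot_of_gt (lt_of_lt_of_le EReal.bot_lt_zero (min_nonneg' p))

lemma gfun_nonneg (p : X × Y) : 0 ≤ gfun f p := by
  have h2 := EReal.toReal_le_toReal (min_nonneg' (f := f) p) EReal.zero_ne_bot (min_ne_top p)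
  rw [EReal.toReal_zero] at h2
  exact h2

lemma gfun_le_one (p : X × Y) : gfun f p ≤ 1 := by
  have h := min_le_right (fplus f p) 1
  have h2 := EReal.toReal_le_toReal h (min_ne_bot p) (by rw [← EReal.coe_one]; exact EReal.coe_ne_top 1)
  rw [EReal.toReal_one] at h2
  exact h2

lemma coe_gfun_le (p : X × Y) : (gfun f p : EReal) ≤ fplus f p := by
  rw [gfun, EReal.coe_toReal (min_ne_top p) (min_ne_bot p)]
  exact min_le_left _ _

lemma gfun_eq_coe {p : X × Y} {t : ℝ} (h : fplus f p = (t : EReal)) :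
    gfun f p = min t 1 := by
  rw [gfun, h]
  have : min ((t : EReal)) 1 = ((min t 1 : ℝ) : EReal) := by
    rcases le_total t 1 with h1 | h1
    · rw [min_eq_left (by exact_mod_cast h1), min_eq_left h1]
    · rw [min_eq_right (by exact_mod_cast h1), min_eq_right h1]; rfl
  rw [this, EReal.toReal_coe]

lemma gfun_le_of_coe {p : X × Y} {t : ℝ} (h : fplus f p = (t : EReal)) :
    gfun f p ≤ t := by
  rw [gfun_eq_coe h]; exact min_le_left _ _

lemma gfun_eq_of_lt_one {p : X × Y} {r : ℝ} (h : f p = (r : EReal)) (h0 : 0 < r)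
    (h1 : r < 1) : gfun f p = r := by
  have : fplus f p = (r : EReal) := by
    rw [fplus_of_pos (by rw [h]; exact_mod_cast h0.le), h]
  rw [gfun_eq_coe this, min_eq_left h1.le]

lemma fplus_zero_of_gfun {p : X × Y} (h : gfun f p ≤ 0) : fplus f p = 0 := by
  rcases eq_or_ne (fplus f p) ⊤ with ht | ht
  · exfalso
    have : min (fplus f p) 1 = 1 := by rw [ht]; exact min_eq_right le_top
    rw [gfun, this] at h
    norm_num at h
  · have hb : fplus f p ≠ ⊥ := ne_bot_of_gt (lt_of_lt_of_le EReal.bot_lt_zero (fplus_nonneg f p))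
    set t := (fplus f p).toReal with htd
    have hc : fplus f p = (t : EReal) := (EReal.coe_toReal ht hb).symm
    have ht0 : 0 ≤ t := by
      have := fplus_nonneg f p
      rw [hc] at this
      exact_mod_cast this
    have := gfun_eq_coe hc
    rw [this] at h
    have : t ≤ 0 := by
      rcases le_total t 1 with h1 | h1
      · rwa [min_eq_left h1] at h
      · rw [min_eq_right h1] at h; norm_num at h
    rw [hc]
    norm_cast
    linarith

lemma gfun_lsc {U : Set (X × Y)} (h : LowerSemicontinuousOn (fplus f) U) :
    LowerSemicontinuousOn (gfun f) U := by
  intro p hp c hc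
  have hc1 : c < 1 := lt_of_lt_of_le hc (gfun_le_one p)
  have h2 : (c : EReal) < fplus f p := by
    have h3 : (c : EReal) < min (fplus f p) 1 :=
      (coe_lt_iff_lt_toReal (min_ne_top p) (min_ne_bot p)).mpr hc
    exact lt_of_lt_of_le h3 (min_le_left _ _)
  filter_upwards [h p hp (c : EReal) h2] with q hq
  have h4 : (c : EReal) < min (fplus f q) 1 :=
    lt_min hq (by exact_mod_cast hc1)
  exact (coe_lt_iff_lt_toReal (min_ne_top q) (min_ne_bot q)).mp h4

end Glem

section Main
variable {X Y : Type*} [MetricSpace X] [CompleteSpace X] [MetricSpace Y] [CompleteSpace Y]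
variable {f : X × Y → EReal} {xbar : X} {ybar : Y}

lemma lemNec (h0 : f (xbar, ybar) = 0) (hP2 : P2 f ybar)
    (h : ∃ τ : ℝ, 0 < τ ∧ hasErrorBound f xbar ybar τ) : 0 < uss f xbar ybar := by
  obtain ⟨τ, hτ, U, hU, hEB⟩ := h
  obtain ⟨c2, hc2, ε2, hε2, hP2r⟩ := p2_cor hP2
  obtain ⟨δ, hδ, hball⟩ := Metric.mem_nhds_iff.mp hU
  set c := min τ 1 / 2 with hcdef
  have hτ1 : 0 < min τ 1 := lt_min hτ one_pos
  have hc0 : 0 < c := by rw [hcdef]; linarith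
  have hcτ : 2 * c ≤ τ := by
    have := min_le_left τ 1
    rw [hcdef]; linarith
  set ρ₀ := min δ (min ε2 (c2 / c)) with hρdef
  have hρ₀ : 0 < ρ₀ := lt_min hδ (lt_min hε2 (div_pos hc2 hc0))
  unfold uss
  apply pos_iSup_of hc0 hρ₀
  rintro p ⟨hp1, hp2, hp3⟩
  obtain ⟨r, hr, hr0, hrρ⟩ := ereal_real hp2 hp3
  rw [nslope, if_neg (by rw [hr]; exact EReal.coe_ne_top r)]
  have hxS : xbar ∈ Sf f ybar := by
    show f (xbar, ybar) ≤ 0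
    rw [h0]
  have hSne : (Sf f ybar).Nonempty := ⟨xbar, hxS⟩
  have hpU : p.1 ∈ U := hball (mem_ball.mpr (lt_of_lt_of_le hp1 (min_le_left _ _)))
  have hEBp := hEB p.1 hpU p.2
  rw [Prod.mk.eta] at hEBp
  have hfpl : fplus f p = (r : EReal) := by rw [fplus_of_pos hp2.le, hr]
  rw [hfpl] at hEBp
  have hID : τ * infDist p.1 (Sf f ybar) ≤ r := by exact_mod_cast hEBp
  have hIDnn : 0 ≤ infDist p.1 (Sf f ybar) := Metric.infDist_nonneg
  have hlt : infDist p.1 (Sf f ybar) < infDist p.1 (Sf f ybar) + r / τ := by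
    have : 0 < r / τ := div_pos hr0 hτ
    linarith
  obtain ⟨xh, hxhS, hxhd⟩ := (Metric.infDist_lt_iff hSne).mp hlt
  set q : X × Y := (xh, ybar) with hqdef
  have hfq : fplus f q = 0 := fplus_of_nonpos hxhS
  have hqp : q ≠ p := by
    intro h
    have h2 : f p ≤ 0 := by rw [← h]; exact hxhS
    exact absurd hp2 (not_lt.mpr h2)
  apply le_iSup₂_of_le q hqp
  rw [hfq, sub_zero, hr, max_eq_left (by exact_mod_cast hr0.le)]
  rw [coe_le_equot_iff (drho_pos hρ₀ (Ne.symm hqp))]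
  rw [EReal.coe_le_coe_iff]
  have hdq : drho ρ₀ p q = max (dist p.1 xh) (ρ₀ * dist p.2 ybar) := rfl
  rw [hdq]
  have hinf : infDist p.1 (Sf f ybar) ≤ r / τ := by
    rw [le_div_iff₀ hτ]; linarith
  have hdy : c2 * dist p.2 ybar < r :=
    hP2r p r hr hr0 (lt_of_lt_of_le hrρ (le_trans (min_le_right _ _) (min_le_left _ _)))
  have hρc : ρ₀ ≤ c2 / c := le_trans (min_le_right _ _) (min_le_right _ _)
  have hdnn : 0 ≤ dist p.2 ybar := dist_nonneg
  rw [mul_max_of_nonneg _ _ hc0.le, max_le_iff]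
  constructor
  · -- c * dist p.1 xh ≤ r
    have h1 : dist p.1 xh < 2 * (r / τ) := by linarith
    have h2 : c * dist p.1 xh ≤ c * (2 * (r / τ)) :=
      mul_le_mul_of_nonneg_left h1.le hc0.le
    have h3 : c * (2 * (r / τ)) ≤ r := by
      rw [show c * (2 * (r / τ)) = (2 * c) * (r / τ) by ring]
      calc (2 * c) * (r / τ) ≤ τ * (r / τ) :=
            mul_le_mul_of_nonneg_right hcτ (by positivity)
        _ = r := by field_simp
    linarith
  · -- c * (ρ₀ * dist p.2 ybar) ≤ r
    have h1 : c * ρ₀ ≤ c2 := by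
      have := mul_le_mul_of_nonneg_left hρc hc0.le
      rwa [mul_div_cancel₀ _ hc0.ne'] at this
    nlinarith

lemma lemC (h : 0 < sos f xbar ybar) : 0 < msos f xbar ybar := by
  apply lt_of_lt_of_le h
  unfold sos msos
  apply iSup₂_mono
  intro ρ hρ
  apply iInf₂_mono
  intro p hp
  exact le_max_left _ _

lemma lemB
    (hb : 0 < liminf (fun p : X × Y => equot (f p) (dist p.1 xbar))
            ((𝓝 xbar).comap Prod.fst ⊓ (𝓝[>] (0 : EReal)).comap f)) :
    0 < msos f xbar ybar := by
  obtain ⟨c, hc0, hc1⟩ := EReal.exists_between_coe_real hb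
  have hev := Filter.eventually_lt_of_lt_liminf hc1
  rw [Filter.eventually_inf] at hev
  obtain ⟨s, hs, t, ht, hst⟩ := hev
  rw [Filter.mem_comap] at hs ht
  obtain ⟨A, hA, hAs⟩ := hs
  obtain ⟨B, hB, hBt⟩ := ht
  obtain ⟨δ, hδ, hballA⟩ := Metric.mem_nhds_iff.mp hA
  obtain ⟨u, hu, husub⟩ :=
    (mem_nhdsGT_iff_exists_Ioo_subset' (show (0:EReal) < ⊤ by simp)).mp hB
  obtain ⟨ε, hε0, hεu⟩ := EReal.exists_between_coe_real hu
  have hc0' : (0:ℝ) < c := by exact_mod_cast hc0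
  set ρ := min δ ε with hρdef
  have hρ : 0 < ρ := lt_min hδ (by exact_mod_cast hε0)
  unfold msos
  apply pos_iSup_of hc0' hρ
  rintro p ⟨hp1, hp2, hp3⟩
  apply le_trans ?_ (le_max_right _ _)
  have hps : p ∈ s := hAs (hballA (mem_ball.mpr (lt_of_lt_of_le hp1 (min_le_left _ _))))
  have hpt : p ∈ t := by
    apply hBt
    show f p ∈ B
    apply husub
    constructor
    · exact hp2
    · exact lt_trans (lt_of_lt_of_le hp3 (by exact_mod_cast min_le_right δ ε)) hεu
  exact (hst p ⟨hps, hpt⟩).le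

end Main

section MainD
variable {X Y : Type*} [MetricSpace X] [CompleteSpace X] [MetricSpace Y] [CompleteSpace Y]
variable {f : X × Y → EReal} {xbar : X} {ybar : Y}

lemma lemD (h0 : f (xbar, ybar) = 0) (hP2 : P2 f ybar)
    (hd : 0 < msos f xbar ybar) : 0 < uss f xbar ybar := by
  obtain ⟨c2, hc2, ε2, hε2, hP2r⟩ := p2_cor hP2
  obtain ⟨γ, hγ, ρs, hρs, H⟩ := pos_iSup_extract (by unfold msos at hd; exact hd)
  set γ3 := γ / 2 with hγ3def
  have hγ3 : 0 < γ3 := by rw [hγ3def]; linarith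
  set ρ' := min ρs (min ε2 (min 1 (c2 / γ))) with hρ'def
  have hρ'0 : 0 < ρ' := lt_min hρs (lt_min hε2 (lt_min one_pos (div_pos hc2 hγ)))
  have hρ'ρs : ρ' ≤ ρs := min_le_left _ _
  have hρ'ε2 : ρ' ≤ ε2 := le_trans (min_le_right _ _) (min_le_left _ _)
  have hρ'1 : ρ' ≤ 1 := le_trans (min_le_right _ _) (le_trans (min_le_right _ _) (min_le_left _ _))
  have hρ'c2 : ρ' ≤ c2 / γ :=
    le_trans (min_le_right _ _) (le_trans (min_le_right _ _) (min_le_right _ _))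
  unfold uss
  apply pos_iSup_of hγ3 hρ'0
  rintro p ⟨hp1, hp2, hp3⟩
  by_contra hcon
  push_neg at hcon
  obtain ⟨r, hr, hr0, hrρ'⟩ := ereal_real hp2 hp3
  rw [nslope, if_neg (by rw [hr]; exact EReal.coe_ne_top r)] at hcon
  -- global almost-stationarity of p
  have hst : ∀ q : X × Y, q ≠ p → f p - fplus f q ≤ ((γ3 * drho ρ' p q : ℝ) : EReal) := by
    intro q hq
    have h1 : equot (max (f p - fplus f q) 0) (drho ρ' p q) < (γ3 : EReal) :=
      lt_of_le_of_lt (le_iSup₂ (f := fun q (_ : q ≠ p) =>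
        equot (max (f p - fplus f q) 0) (drho ρ' p q)) q hq) hcon
    rw [equot_lt_coe_iff (drho_pos hρ'0 (Ne.symm hq))] at h1
    exact le_of_lt (lt_of_le_of_lt (le_max_left _ _) h1)
  have hzero : ∀ q : X × Y, q ≠ p → fplus f q = 0 → r ≤ γ3 * drho ρ' p q := by
    intro q hq hfq
    have := hst q hq
    rw [hfq, sub_zero, hr] at this
    exact_mod_cast this
  -- the (xbar, ybar) test
  have hq0ne : (xbar, ybar) ≠ p := by
    intro h
    rw [← h, h0] at hp2
    exact lt_irrefl _ hp2
  have hq0 : r ≤ γ3 * drho ρ' p (xbar, ybar) :=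
    hzero _ hq0ne (fplus_of_nonpos (le_of_eq h0))
  have hdrho0 : drho ρ' p (xbar, ybar) = max (dist p.1 xbar) (ρ' * dist p.2 ybar) := rfl
  -- bound the quotient term
  have hquot : equot (f p) (dist p.1 xbar) ≤ (γ3 : EReal) := by
    rcases le_total (ρ' * dist p.2 ybar) (dist p.1 xbar) with hbr | hbr
    · have hdx : r ≤ γ3 * dist p.1 xbar := by
        rw [hdrho0, max_eq_left hbr] at hq0
        exact hq0
      have hdxpos : 0 < dist p.1 xbar := by nlinarith
      rw [hr, equot_le_coe_iff hdxpos]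
      exact_mod_cast (by linarith : r ≤ γ3 * dist p.1 xbar)
    · exfalso
      have hdy : r ≤ γ3 * (ρ' * dist p.2 ybar) := by
        rw [hdrho0, max_eq_right hbr] at hq0
        exact hq0
      have hP2p := hP2r p r hr hr0 (lt_of_lt_of_le hrρ' hρ'ε2)
      have hdypos : 0 < dist p.2 ybar := by
        rcases eq_or_lt_of_le (dist_nonneg : (0:ℝ) ≤ dist p.2 ybar) with h | h
        · exfalso; rw [← h, mul_zero, mul_zero] at hdy; linarith
        · exact h
      -- c2 * d < r ≤ γ3 * ρ' * d  and γ3 * ρ' ≤ (γ/2)(c2/γ) = c2/2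
      have h5 : γ3 * ρ' ≤ c2 / 2 := by
        have h6 : γ * ρ' ≤ c2 := by
          have := mul_le_mul_of_nonneg_left hρ'c2 hγ.le
          rwa [mul_div_cancel₀ _ hγ.ne'] at this
        rw [hγ3def]; linarith
      nlinarith
  -- bound the local slope
  have hlslope : lslope f ρs p ≤ (γ3 : EReal) := by
    apply Filter.limsup_le_of_le (by isBoundedDefault)
    set rad := r / (2 * γ3) with hraddef
    have hrad : 0 < rad := by positivity
    have h1 : ∀ᶠ q in 𝓝[≠] p, dist q p < rad := by
      apply Filter.Eventually.filter_mono nhdsWithin_le_nhds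
      filter_upwards [Metric.ball_mem_nhds p hrad] with q hq
      rwa [Metric.mem_ball] at hq
    have h2 : ∀ᶠ q : X × Y in 𝓝[≠] p, q ≠ p := eventually_mem_nhdsWithin
    filter_upwards [h1, h2] with q hq1 hq2
    have hdq : 0 < drho ρs q p := drho_pos hρs hq2
    rw [equot_le_coe_iff hdq]
    have hfq0 : 0 ≤ f q := by
      by_contra hneg
      push_neg at hneg
      have h3 := hzero q hq2 (fplus_of_nonpos hneg.le)
      have h4 : drho ρ' p q ≤ dist p q := drho_le_dist hρ'0 hρ'1 p q
      rw [dist_comm q p] at hq1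
      have hradeq : γ3 * rad = r / 2 := by
        rw [hraddef]; field_simp
      have h5 : γ3 * drho ρ' p q ≤ γ3 * dist p q := mul_le_mul_of_nonneg_left h4 hγ3.le
      have h6 : γ3 * dist p q < γ3 * rad := mul_lt_mul_of_pos_left hq1 hγ3
      linarith
    have h5 := hst q hq2
    rw [fplus_of_pos hfq0, hr] at h5
    rw [hr]
    apply max_coe_sub_le (f q) hfq0 (by positivity)
    intro t ht hfqt
    rw [hfqt] at h5
    rw [← EReal.coe_sub, EReal.coe_le_coe_iff] at h5
    have h6 : drho ρ' p q ≤ drho ρs q p := by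
      rw [drho_comm ρ' p q]
      exact drho_mono hρ'ρs q p
    nlinarith
  -- contradiction with H
  have hH := H p ⟨lt_of_lt_of_le hp1 hρ'ρs, hp2,
    lt_of_lt_of_le hp3 (by exact_mod_cast hρ'ρs)⟩
  have := lt_of_lt_of_le hH (max_le hlslope hquot)
  have : γ < γ3 := by exact_mod_cast this
  rw [hγ3def] at this
  linarith

end MainD

section MainA
variable {X Y : Type*} [MetricSpace X] [CompleteSpace X] [MetricSpace Y] [CompleteSpace Y]
variable {f : X × Y → EReal} {xbar : X} {ybar : Y}

lemma lemA (h0 : f (xbar, ybar) = 0) (hP1 : P1 f ybar) (hP2 : P2 f ybar)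
    (hlsc : ∃ U ∈ 𝓝 (xbar, ybar), LowerSemicontinuousOn (fplus f) U)
    (ha : 0 < uss f xbar ybar) :
    ∃ τ : ℝ, 0 < τ ∧ hasErrorBound f xbar ybar τ := by
  obtain ⟨c2, hc2, ε2, hε2, hP2r⟩ := p2_cor hP2
  obtain ⟨γ, hγ, ρs, hρs, H⟩ := pos_iSup_extract (by unfold uss at ha; exact ha)
  obtain ⟨U, hU, hlscU⟩ := hlsc
  obtain ⟨rU, hrU, hballU⟩ := Metric.mem_nhds_iff.mp hU
  set ε0 := rU / 2 with hε0def
  have hε0 : 0 < ε0 := by rw [hε0def]; linarith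
  set V : Set (X × Y) := closedBall xbar ε0 ×ˢ closedBall ybar ε0 with hVdef
  have hVU : V ⊆ U := by
    intro q hq
    apply hballU
    rw [mem_ball, Prod.dist_eq]
    rw [hVdef, Set.mem_prod] at hq
    have h1 := mem_closedBall.mp hq.1
    have h2 := mem_closedBall.mp hq.2
    rw [max_lt_iff]
    constructor <;> [linarith; linarith]
  have hVclosed : IsClosed V := IsClosed.prod Metric.isClosed_closedBall Metric.isClosed_closedBall
  set τ'' := 3 * γ / 4 with hτ''def
  have hτ'' : 0 < τ'' := by rw [hτ''def]; linarith
  set ρ := min ρs (min (ε0 / 2) 1) with hρdef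
  have hρ0 : 0 < ρ := lt_min hρs (lt_min (by linarith) one_pos)
  have hρρs : ρ ≤ ρs := min_le_left _ _
  have hρε0 : ρ ≤ ε0 / 2 := le_trans (min_le_right _ _) (min_le_left _ _)
  have hρ1 : ρ ≤ 1 := le_trans (min_le_right _ _) (min_le_right _ _)
  set ε' := min ε2 (min (c2 * ε0 / 2) (min (τ'' * ρ / 2) (min (τ'' * ρ * ε0 / 2) (min ρ (1/2)))))
    with hε'def
  have hε'0 : 0 < ε' := lt_min hε2 (lt_min (by positivity) (lt_min (by positivity)
    (lt_min (by positivity) (lt_min hρ0 (by norm_num)))))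
  have hε'1 : ε' ≤ ε2 := min_le_left _ _
  have hε'2 : ε' ≤ c2 * ε0 / 2 := le_trans (min_le_right _ _) (min_le_left _ _)
  have hε'3 : ε' ≤ τ'' * ρ / 2 :=
    le_trans (min_le_right _ _) (le_trans (min_le_right _ _) (min_le_left _ _))
  have hε'4 : ε' ≤ τ'' * ρ * ε0 / 2 :=
    le_trans (min_le_right _ _) (le_trans (min_le_right _ _)
      (le_trans (min_le_right _ _) (min_le_left _ _)))
  have hε'5 : ε' ≤ ρ :=
    le_trans (min_le_right _ _) (le_trans (min_le_right _ _)
      (le_trans (min_le_right _ _) (le_trans (min_le_right _ _) (min_le_left _ _))))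
  have hε'6 : ε' ≤ 1/2 :=
    le_trans (min_le_right _ _) (le_trans (min_le_right _ _)
      (le_trans (min_le_right _ _) (le_trans (min_le_right _ _) (min_le_right _ _))))
  set δ := ρ / 2 with hδdef
  have hδ : 0 < δ := by rw [hδdef]; linarith
  set τ := min (γ / 2) (2 * ε' / ρ) with hτdef
  have hτ0 : 0 < τ := lt_min (by linarith) (by positivity)
  have hτγ : τ ≤ γ / 2 := min_le_left _ _
  have hτρ : τ * ρ ≤ 2 * ε' := by
    have h1 : τ ≤ 2 * ε' / ρ := min_le_right _ _
    have h2 := mul_le_mul_of_nonneg_right h1 hρ0.le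
    rwa [div_mul_cancel₀ _ hρ0.ne'] at h2
  have hττ'' : τ < τ'' := by
    rw [hτ''def]; have := hτγ; linarith
  refine ⟨τ, hτ0, ball xbar δ, ball_mem_nhds _ hδ, ?_⟩
  intro x hx y
  rw [mem_ball] at hx
  set p : X × Y := (x, y) with hpdef
  have hxS : xbar ∈ Sf f ybar := by show f (xbar, ybar) ≤ 0; rw [h0]
  have hinfle : infDist x (Sf f ybar) ≤ dist x xbar := Metric.infDist_le_dist_of_mem hxS
  have hinfnn : 0 ≤ infDist x (Sf f ybar) := Metric.infDist_nonneg
  rcases le_or_gt (f p) 0 with hfp | hfp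
  · -- case f p ≤ 0 : then y = ybar and x ∈ S
    have hy : y = ybar := by
      by_contra hne
      exact absurd (hP1 p hne) (not_lt.mpr hfp)
    have hxSS : x ∈ Sf f ybar := by
      show f (x, ybar) ≤ 0
      rw [← hy]
      exact hfp
    rw [infDist_zero_of_mem hxSS, mul_zero, EReal.coe_zero]
    exact fplus_nonneg f p
  rcases le_or_gt ((ε' : ℝ) : EReal) (f p) with hfp2 | hfp2
  · -- case f p ≥ ε'
    have h1 : τ * infDist x (Sf f ybar) ≤ ε' := by nlinarith
    calc ((τ * infDist x (Sf f ybar) : ℝ) : EReal) ≤ ((ε' : ℝ) : EReal) := by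
          exact_mod_cast h1
      _ ≤ f p := hfp2
      _ ≤ fplus f p := le_max_left _ _
  -- main case : 0 < f p < ε'
  obtain ⟨r, hr, hr0, hrε⟩ := ereal_real hfp hfp2
  by_contra hcon
  push_neg at hcon
  have hfpl : fplus f p = (r : EReal) := by rw [fplus_of_pos hfp.le, hr]
  rw [hfpl] at hcon
  have hrID : r < τ * infDist x (Sf f ybar) := by exact_mod_cast hcon
  have hIDpos : 0 < infDist x (Sf f ybar) := by
    by_contra hI
    push_neg at hI
    have : τ * infDist x (Sf f ybar) ≤ 0 := mul_nonpos_of_nonneg_of_nonpos hτ0.le hI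
    linarith
  have hgp : gfun f p = r := gfun_eq_of_lt_one hr hr0 (by linarith)
  have hdy : c2 * dist y ybar < r := hP2r p r hr hr0 (by linarith)
  have hdy' : dist y ybar ≤ ε0 := by
    have h1 : c2 * dist y ybar < c2 * (ε0 / 2) := by linarith
    have h2 := lt_of_mul_lt_mul_left h1 hc2.le
    linarith
  have hpV : p ∈ V := by
    rw [hVdef, Set.mem_prod]
    exact ⟨mem_closedBall.mpr (by show dist x xbar ≤ ε0; linarith),
      mem_closedBall.mpr hdy'⟩
  have hκ : 0 < τ'' * ρ := mul_pos hτ'' hρ0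
  obtain ⟨u, huV, hu1, hu2⟩ := evp (g := gfun f) (D := fun a b => τ'' * drho ρ a b)
    (κ := τ'' * ρ) hVclosed (fun q _ => gfun_nonneg q) (gfun_lsc (hlscU.mono hVU))
    (fun a => by show τ'' * drho ρ a a = 0; rw [drho_self, mul_zero])
    (fun a b c => by
      show τ'' * drho ρ a c ≤ τ'' * drho ρ a b + τ'' * drho ρ b c
      have h := drho_triangle ρ hρ0.le a b c
      have h2 := mul_le_mul_of_nonneg_left h hτ''.le
      rw [mul_add] at h2
      linarith)
    hκ
    (fun a b => by
      show τ'' * ρ * dist a b ≤ τ'' * drho ρ a b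
      have h := dist_mul_le_drho hρ0 hρ1 a b
      have h2 := mul_le_mul_of_nonneg_left h hτ''.le
      rw [← mul_assoc] at h2
      exact h2)
    (fun a => by
      show Continuous fun b => τ'' * drho ρ a b
      apply continuous_const.mul
      unfold drho
      exact (continuous_const.dist continuous_fst).max
        (continuous_const.mul (continuous_const.dist continuous_snd)))
    hpV
  rw [hgp] at hu1
  have hgu_nn : 0 ≤ gfun f u := gfun_nonneg u
  have hdru : τ'' * drho ρ p u ≤ r := by linarith
  have hgu_le : gfun f u ≤ r := by
    have := mul_nonneg hτ''.le (drho_nonneg hρ0.le p u)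
    linarith
  rcases le_or_gt (gfun f u) 0 with hgu | hgu
  · -- Ekeland point is a solution : contradiction with r < τ * infDist
    have hfpu : fplus f u = 0 := fplus_zero_of_gfun hgu
    have hfu : f u ≤ 0 := by
      have h := le_max_left (f u) 0
      rw [show max (f u) 0 = fplus f u from rfl, hfpu] at h
      exact h
    have hu2y : u.2 = ybar := by
      by_contra hne
      exact absurd (hP1 u hne) (not_lt.mpr hfu)
    have huS : u.1 ∈ Sf f ybar := by
      show f (u.1, ybar) ≤ 0
      rw [← hu2y, Prod.mk.eta]
      exact hfu
    have h5 : infDist x (Sf f ybar) ≤ dist x u.1 := Metric.infDist_le_dist_of_mem huS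
    have h6 : dist x u.1 ≤ drho ρ p u := le_drho_left ρ p u
    have e1 : τ'' * infDist x (Sf f ybar) ≤ τ'' * drho ρ p u :=
      mul_le_mul_of_nonneg_left (le_trans h5 h6) hτ''.le
    have e2 : τ * infDist x (Sf f ybar) < τ'' * infDist x (Sf f ybar) :=
      mul_lt_mul_of_pos_right hττ'' hIDpos
    linarith
  · -- Ekeland point has positive value : contradiction with the slope bound
    have hgu' : (0 : EReal) < ((gfun f u : ℝ) : EReal) := by exact_mod_cast hgu
    have hfplu_pos : (0 : EReal) < fplus f u := lt_of_lt_of_le hgu' (coe_gfun_le u)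
    have hfu_pos : 0 < f u := by
      rcases le_or_gt (f u) 0 with h | h
      · rw [fplus_of_nonpos h] at hfplu_pos
        exact absurd hfplu_pos (lt_irrefl 0)
      · exact h
    have hfueq : f u = ((gfun f u : ℝ) : EReal) := by
      rcases le_or_gt (fplus f u) 1 with hb | hb
      · have hne_top : fplus f u ≠ ⊤ := by
          intro h
          rw [h] at hb
          have h2 : (1 : EReal) = ⊤ := top_le_iff.mp hb
          rw [← EReal.coe_one] at h2
          exact EReal.coe_ne_top 1 h2
        have hne_bot : fplus f u ≠ ⊥ := ne_bot_of_gt hfplu_pos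
        have hgr : gfun f u = (fplus f u).toReal := by rw [gfun, min_eq_left hb]
        rw [← fplus_of_pos hfu_pos.le, hgr, EReal.coe_toReal hne_top hne_bot]
      · exfalso
        have h2 : gfun f u = 1 := by rw [gfun, min_eq_right hb.le, EReal.toReal_one]
        rw [h2] at hgu_le
        linarith
    have hdu2 : c2 * dist u.2 ybar < gfun f u := hP2r u (gfun f u) hfueq hgu (by linarith)
    have hdu2' : dist u.2 ybar ≤ ε0 / 2 := by
      have h1 : c2 * dist u.2 ybar < c2 * (ε0 / 2) := by linarith
      exact (lt_of_mul_lt_mul_left h1 hc2.le).le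
    have hdux : dist x u.1 ≤ drho ρ p u := le_drho_left ρ p u
    have hdxu2 : dist x u.1 < ρ / 2 := by
      have h4 : τ'' * dist x u.1 ≤ r := le_trans (mul_le_mul_of_nonneg_left hdux hτ''.le) hdru
      nlinarith
    have hu1x : dist u.1 xbar < ρ := by
      have h1 : dist u.1 xbar ≤ dist u.1 x + dist x xbar := dist_triangle _ _ _
      rw [dist_comm u.1 x] at h1
      have hδρ : δ = ρ / 2 := hδdef
      linarith
    have hu1x2 : dist u.1 xbar ≤ ε0 / 2 := by linarith
    have hH := H u ⟨lt_of_lt_of_le hu1x hρρs, hfu_pos, by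
      rw [hfueq]
      have : gfun f u < ρs := by linarith
      exact_mod_cast this⟩
    have hnb : nslope f ρs u ≤ (τ'' : EReal) := by
      rw [nslope, if_neg (by rw [hfueq]; exact EReal.coe_ne_top _)]
      apply iSup₂_le
      intro q hq
      have hdq : 0 < drho ρs u q := drho_pos hρs (Ne.symm hq)
      rw [equot_le_coe_iff hdq, hfueq]
      apply max_coe_sub_le (fplus f q) (fplus_nonneg f q)
        (mul_nonneg hτ''.le (drho_nonneg hρs.le u q))
      intro t ht hfqt
      rcases Classical.em (q ∈ V) with hqV | hqV
      · have h7 := hu2 q hqV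
        have h8 : gfun f q ≤ t := gfun_le_of_coe hfqt
        have h9 : drho ρ u q ≤ drho ρs u q := drho_mono hρρs u q
        have h10 : τ'' * drho ρ u q ≤ τ'' * drho ρs u q :=
          mul_le_mul_of_nonneg_left h9 hτ''.le
        linarith
      · have hqz : ¬ dist q (xbar, ybar) ≤ ε0 := by
          intro h
          apply hqV
          rw [Prod.dist_eq, max_le_iff] at h
          rw [hVdef, Set.mem_prod]
          exact ⟨mem_closedBall.mpr h.1, mem_closedBall.mpr h.2⟩
        push_neg at hqz
        have hdistuz : dist u (xbar, ybar) ≤ ε0 / 2 := by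
          rw [Prod.dist_eq]
          exact max_le hu1x2 hdu2'
        have hdistuq : ε0 / 2 ≤ dist u q := by
          have h := dist_triangle q u (xbar, ybar)
          rw [dist_comm q u] at h
          linarith
        have h13 : τ'' * (ρ * (ε0 / 2)) ≤ τ'' * drho ρs u q := by
          apply mul_le_mul_of_nonneg_left _ hτ''.le
          calc ρ * (ε0 / 2) ≤ ρ * dist u q := mul_le_mul_of_nonneg_left hdistuq hρ0.le
            _ ≤ drho ρ u q := dist_mul_le_drho hρ0 hρ1 u q
            _ ≤ drho ρs u q := drho_mono hρρs u q
        have h14 : τ'' * ρ * ε0 / 2 = τ'' * (ρ * (ε0 / 2)) := by ring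
        linarith
    have hlt := lt_of_lt_of_le hH hnb
    have hlt2 : γ < τ'' := by exact_mod_cast hlt
    rw [hτ''def] at hlt2
    linarith

end MainA

/-- sufficient (and, for (a), necessary) criteria for the error bound property. -/
theorem statement10 {X Y : Type*} [MetricSpace X] [CompleteSpace X] [MetricSpace Y] [CompleteSpace Y]
    (f : X × Y → EReal) (xbar : X) (ybar : Y)
    (hbot : ∀ p, f p ≠ ⊥) (h0 : f (xbar, ybar) = 0)
    (hP1 : P1 f ybar) (hP2 : P2 f ybar)
    (hlsc : ∃ U ∈ 𝓝 (xbar, ybar), LowerSemicontinuousOn (fplus f) U) :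
    ((0 < uss f xbar ybar ∨
      0 < liminf (fun p : X × Y => equot (f p) (dist p.1 xbar))
            ((𝓝 xbar).comap Prod.fst ⊓ (𝓝[>] (0 : EReal)).comap f) ∨
      0 < sos f xbar ybar ∨
      0 < msos f xbar ybar) →
      ∃ τ : ℝ, 0 < τ ∧ hasErrorBound f xbar ybar τ) ∧
    ((∃ τ : ℝ, 0 < τ ∧ hasErrorBound f xbar ybar τ) → 0 < uss f xbar ybar) := by
  constructor
  · rintro (ha | hb | hc | hd)
    · exact lemA h0 hP1 hP2 hlsc ha
    · exact lemA h0 hP1 hP2 hlsc (lemD h0 hP2 (lemB hb))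
    · exact lemA h0 hP1 hP2 hlsc (lemD h0 hP2 (lemC hc))
    · exact lemA h0 hP1 hP2 hlsc (lemD h0 hP2 hd)
  · exact lemNec h0 hP2

end HolderPaper
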